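/- In the Heisenberg group H(ℝ) of upper unitriangular 3×3 real matrices, if Δ is a subgroup commensurable with H(ℤ), then every element of Δ has all entries rational, i.e., Δ ≤ H(ℚ). -/

import Mathlib

/-- The Heisenberg group over a commutative ring `R`: upper unitriangular 3×3
matrices, recorded by their off-diagonal entries `x` (entry (1,2)),
`y` (entry (2,3)) and `z` (entry (1,3)). -/
@[ext]
structure Heis (R : Type*) where
  x : R
  y : R
  z : R

namespace Heis

variable {R : Type*} [CommRing R]

instance : Mul (Heis R) := ⟨fun a b => ⟨a.x + b.x, a.y + b.y, a.z + b.z + a.x * b.y⟩⟩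
instance : One (Heis R) := ⟨⟨0, 0, 0⟩⟩
instance : Inv (Heis R) := ⟨fun a => ⟨-a.x, -a.y, -a.z + a.x * a.y⟩⟩

@[simp] theorem mul_x (a b : Heis R) : (a * b).x = a.x + b.x := rfl
@[simp] theorem mul_y (a b : Heis R) : (a * b).y = a.y + b.y := rfl
@[simp] theorem mul_z (a b : Heis R) : (a * b).z = a.z + b.z + a.x * b.y := rfl
@[simp] theorem one_x : (1 : Heis R).x = 0 := rfl
@[simp] theorem one_y : (1 : Heis R).y = 0 := rfl
@[simp] theorem one_z : (1 : Heis R).z = 0 := rfl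
@[simp] theorem inv_x (a : Heis R) : a⁻¹.x = -a.x := rfl
@[simp] theorem inv_y (a : Heis R) : a⁻¹.y = -a.y := rfl
@[simp] theorem inv_z (a : Heis R) : a⁻¹.z = -a.z + a.x * a.y := rfl

instance : Group (Heis R) where
  mul_assoc a b c := by ext <;> simp <;> ring
  one_mul a := by ext <;> simp
  mul_one a := by ext <;> simp
  inv_mul_cancel a := by ext <;> simp

end Heis

/-- The integral Heisenberg lattice `H(ℤ)` inside `H(ℝ)`. -/
def HeisZ : Subgroup (Heis ℝ) where
  carrier := {a | (∃ m : ℤ, (m : ℝ) = a.x) ∧ (∃ m : ℤ, (m : ℝ) = a.y) ∧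
    ∃ m : ℤ, (m : ℝ) = a.z}
  one_mem' := ⟨⟨0, by simp⟩, ⟨0, by simp⟩, ⟨0, by simp⟩⟩
  mul_mem' := by
    rintro a b ⟨⟨ax, hax⟩, ⟨ay, hay⟩, ⟨az, haz⟩⟩ ⟨⟨bx, hbx⟩, ⟨by', hby⟩, ⟨bz, hbz⟩⟩
    exact ⟨⟨ax + bx, by push_cast; rw [hax, hbx]; simp⟩,
      ⟨ay + by', by push_cast; rw [hay, hby]; simp⟩,
      ⟨az + bz + ax * by', by push_cast; rw [haz, hbz, hax, hby]; simp⟩⟩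
  inv_mem' := by
    rintro a ⟨⟨ax, hax⟩, ⟨ay, hay⟩, ⟨az, haz⟩⟩
    exact ⟨⟨-ax, by push_cast; rw [hax]; simp⟩, ⟨-ay, by push_cast; rw [hay]; simp⟩,
      ⟨-az + ax * ay, by push_cast; rw [haz, hax, hay]; simp⟩⟩

lemma Heis.pow_entries (a : Heis ℝ) (n : ℕ) :
    (a ^ n).x = n * a.x ∧ (a ^ n).y = n * a.y ∧
    (a ^ n).z = n * a.z + (n * (n - 1) / 2 : ℝ) * (a.x * a.y) := by
  induction n with
  | zero => simp [pow_zero]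
  | succ k ih =>
    obtain ⟨hx, hy, hz⟩ := ih
    rw [pow_succ]
    refine ⟨by simp [hx]; push_cast; ring, by simp [hy]; push_cast; ring, ?_⟩
    simp [hz, hx]
    push_cast
    ring

/-- In the Heisenberg group `H(ℝ)`, every subgroup `Δ` commensurable with
`H(ℤ)` satisfies `Δ ≤ H(ℚ)`: all entries of all elements of `Δ` are rational. -/
theorem heisenberg_commensurable_subgroup_rational (Δ : Subgroup (Heis ℝ))
    (h1 : Subgroup.relIndex Δ HeisZ ≠ 0) (h2 : Subgroup.relIndex HeisZ Δ ≠ 0) :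
    ∀ a ∈ Δ, (∃ q : ℚ, (q : ℝ) = a.x) ∧ (∃ q : ℚ, (q : ℝ) = a.y) ∧
      ∃ q : ℚ, (q : ℝ) = a.z := by
  intro a ha
  obtain ⟨n, hn, -, hmem⟩ := Subgroup.exists_pow_mem_of_relIndex_ne_zero h2 ha
  obtain ⟨⟨mx, hmx⟩, ⟨my, hmy⟩, ⟨mz, hmz⟩⟩ := hmem.1
  obtain ⟨hx, hy, hz⟩ := Heis.pow_entries a n
  have hn' : (n : ℝ) ≠ 0 := Nat.cast_ne_zero.mpr hn.ne'
  have hax : a.x = (mx : ℝ) / n := by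
    field_simp
    rw [hmx, hx]; ring
  have hay : a.y = (my : ℝ) / n := by
    field_simp
    rw [hmy, hy]; ring
  refine ⟨⟨(mx : ℚ) / n, by rw [hax]; push_cast; ring⟩,
    ⟨(my : ℚ) / n, by rw [hay]; push_cast; ring⟩,
    ⟨((mz : ℚ) - (n * (n - 1) / 2) * ((mx / n) * (my / n))) / n, ?_⟩⟩
  have key : (mz : ℝ) = n * a.z + (n * (n - 1) / 2) * (((mx : ℝ) / n) * ((my : ℝ) / n)) := by
    rw [hmz, hz, hax, hay]
  have haz : a.z = ((mz : ℝ) - (n * (n - 1) / 2) * (((mx : ℝ) / n) * ((my : ℝ) / n))) / n := by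
    field_simp
    field_simp at key
    linarith [key]
  rw [haz]
  push_cast
  ring
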